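/- For m×n complex matrices A and B, per(A B*) = ∑_{K ∈ ℕ^n, |K| = m} K! · coe(x^K, F_A) · conj(coe(x^K, F_B)), where B* is the conjugate transpose of B and coe(x^K, F) denotes the coefficient of the monomial x^K in F. Equivalently, per(A B*) = ⟨F_A, F_B⟩ for the inner product ⟨f,g⟩ = ∑_K K! coe(x^K,f) conj(coe(x^K,g)) on homogeneous polynomials of degree m. -/

import Mathlib

open MvPolynomial ComplexConjugate Matrix

/-- `F_A(x) = ∏_{i=1}^m ∑_{j=1}^n a_{ij} x_j`. -/
noncomputable def FA {m n : ℕ} (A : Matrix (Fin m) (Fin n) ℂ) : MvPolynomial (Fin n) ℂ :=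
  ∏ i : Fin m, ∑ j : Fin n, MvPolynomial.C (A i j) * MvPolynomial.X j

open Finset

variable {m n : ℕ}

noncomputable def D (f : Fin m → Fin n) : Fin n →₀ ℕ := ∑ i, Finsupp.single (f i) 1

lemma D_apply (f : Fin m → Fin n) (j : Fin n) :
    D f j = (Finset.univ.filter fun i => f i = j).card := by
  classical
  rw [Finset.card_filter, D, Finsupp.finset_sum_apply]
  exact Finset.sum_congr rfl fun i _ => by rw [Finsupp.single_apply]

lemma sum_D (f : Fin m → Fin n) : ∑ j, D f j = m := by
  classical
  simp only [D_apply, Finset.card_filter]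
  rw [Finset.sum_comm]
  simp

lemma card_fiber (f : Fin m → Fin n) (j : Fin n) :
    Fintype.card {i // f i = j} = D f j := by
  classical
  rw [D_apply, Fintype.card_subtype]

def permEquiv (f g : Fin m → Fin n) :
    {σ : Equiv.Perm (Fin m) // f ∘ σ = g} ≃
      ((j : Fin n) → ({i // g i = j} ≃ {i // f i = j})) where
  toFun σ j := σ.1.subtypeEquiv fun a => by rw [← congrFun σ.2 a]; rfl
  invFun e := ⟨(Equiv.sigmaFiberEquiv g).symm.trans
      ((Equiv.sigmaCongrRight e).trans (Equiv.sigmaFiberEquiv f)),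
    funext fun i => (e (g i) ⟨i, rfl⟩).2⟩
  left_inv σ := by
    ext i
    rfl
  right_inv e := by
    funext j
    ext ⟨i, hi⟩
    subst hi
    rfl

lemma card_perm_filter (f g : Fin m → Fin n) :
    (Finset.univ.filter fun σ : Equiv.Perm (Fin m) => f ∘ σ = g).card
      = if D f = D g then ∏ j, (D f j).factorial else 0 := by
  classical
  rw [← Fintype.card_subtype, Fintype.card_congr (permEquiv f g), Fintype.card_pi]
  by_cases h : D f = D g
  · rw [if_pos h]
    refine Finset.prod_congr rfl fun j _ => ?_
    have hc : Fintype.card {i // g i = j} = Fintype.card {i // f i = j} := by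
      rw [card_fiber, card_fiber, h]
    rw [Fintype.card_equiv (Fintype.equivOfCardEq hc), card_fiber, ← h]
  · rw [if_neg h]
    obtain ⟨j, hj⟩ : ∃ j, D f j ≠ D g j := by
      by_contra hc
      push_neg at hc
      exact h (Finsupp.ext hc)
    refine Finset.prod_eq_zero (Finset.mem_univ j) ?_
    rw [Fintype.card_eq_zero_iff]
    exact ⟨fun e => hj (by rw [← card_fiber, ← card_fiber, Fintype.card_congr e])⟩

lemma FA_aux (A : Matrix (Fin m) (Fin n) ℂ) (f : Fin m → Fin n) (s : Finset (Fin m)) :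
    (∏ i ∈ s, (C (A i (f i)) * X (f i) : MvPolynomial (Fin n) ℂ))
      = C (∏ i ∈ s, A i (f i)) * monomial (∑ i ∈ s, Finsupp.single (f i) 1) 1 := by
  classical
  induction s using Finset.induction with
  | empty => simp
  | insert _ _ h ih =>
      rw [Finset.prod_insert h, Finset.prod_insert h, Finset.sum_insert h, ih, X,
        mul_mul_mul_comm, monomial_mul, C_mul, one_mul]

lemma FA_eq (A : Matrix (Fin m) (Fin n) ℂ) :
    FA A = ∑ f : Fin m → Fin n, C (∏ i, A i (f i)) * monomial (D f) 1 := by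
  classical
  rw [FA, Fintype.prod_sum]
  exact Finset.sum_congr rfl fun f _ => FA_aux A f Finset.univ

lemma coeff_FA (A : Matrix (Fin m) (Fin n) ℂ) (K : Fin n →₀ ℕ) :
    coeff K (FA A) = ∑ f : Fin m → Fin n, if D f = K then ∏ i, A i (f i) else 0 := by
  classical
  rw [FA_eq, coeff_sum]
  refine Finset.sum_congr rfl fun f _ => ?_
  rw [coeff_C_mul, coeff_monomial]
  split_ifs <;> simp

lemma sum_perm_comp (f : Fin m → Fin n) (Q : (Fin m → Fin n) → ℂ) :
    ∑ σ : Equiv.Perm (Fin m), Q (f ∘ σ)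
      = ∑ g : Fin m → Fin n,
          ((Finset.univ.filter fun σ : Equiv.Perm (Fin m) => f ∘ σ = g).card : ℂ) * Q g := by
  classical
  rw [Finset.sum_comp Q (fun σ : Equiv.Perm (Fin m) => f ∘ σ)]
  rw [Finset.sum_subset (Finset.subset_univ _)]
  · exact Finset.sum_congr rfl fun g _ => by rw [nsmul_eq_mul]
  · intro g _ hg
    suffices h : (Finset.univ.filter fun σ : Equiv.Perm (Fin m) => f ∘ σ = g) = ∅ by
      rw [h]; simp
    rw [Finset.filter_eq_empty_iff]
    intro σ _ hσ
    exact hg (Finset.mem_image.mpr ⟨σ, Finset.mem_univ σ, hσ⟩)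

lemma lhs_eq (A B : Matrix (Fin m) (Fin n) ℂ) :
    Matrix.permanent (A * Bᴴ)
      = ∑ f : Fin m → Fin n, ∑ σ : Equiv.Perm (Fin m),
          (∏ i, A i (f i)) * ∏ i, conj (B i ((f ∘ σ) i)) := by
  classical
  rw [Matrix.permanent]
  have h1 : ∀ σ : Equiv.Perm (Fin m),
      (∏ i, (A * Bᴴ) (σ i) i)
        = ∑ f : Fin m → Fin n, (∏ i, A i ((f ∘ ⇑σ⁻¹) i)) * ∏ i, conj (B i (f i)) := by
    intro σ
    have : ∀ i, (A * Bᴴ) (σ i) i = ∑ j, A (σ i) j * conj (B i j) := by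
      intro i
      rw [Matrix.mul_apply]
      exact Finset.sum_congr rfl fun j _ => by rw [Matrix.conjTranspose_apply]; rfl
    rw [Fintype.prod_congr _ _ this, Fintype.prod_sum]
    refine Finset.sum_congr rfl fun f _ => ?_
    rw [Finset.prod_mul_distrib]
    congr 1
    calc ∏ i, A (σ i) (f i)
        = ∏ i, (fun x => A x ((f ∘ ⇑σ⁻¹) x)) (σ i) :=
          Fintype.prod_congr _ _ fun i => by simp
      _ = ∏ x, A x ((f ∘ ⇑σ⁻¹) x) := Equiv.prod_comp σ fun x => A x ((f ∘ ⇑σ⁻¹) x)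
  rw [Fintype.sum_congr _ _ h1]
  have h2 : ∀ σ : Equiv.Perm (Fin m),
      (∑ f : Fin m → Fin n, (∏ i, A i ((f ∘ ⇑σ⁻¹) i)) * ∏ i, conj (B i (f i)))
        = ∑ h : Fin m → Fin n, (∏ i, A i (h i)) * ∏ i, conj (B i ((h ∘ σ) i)) := by
    intro σ
    refine (Fintype.sum_equiv (Equiv.arrowCongr σ.symm (Equiv.refl (Fin n)))
      _ _ fun h => ?_).symm
    have hh : ((Equiv.arrowCongr σ.symm (Equiv.refl (Fin n))) h) ∘ ⇑σ⁻¹ = h := by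
      funext i; simp
    rw [hh]
    simp [Equiv.arrowCongr]
  rw [Fintype.sum_congr _ _ h2, Finset.sum_comm]

/-- `per(A B*) = ∑_{K ∈ ℕ^n, |K| = m} K! · coe(x^K, F_A) · conj(coe(x^K, F_B))`. -/
theorem stmt1 (m n : ℕ) (A B : Matrix (Fin m) (Fin n) ℂ) :
    Matrix.permanent (A * Bᴴ)
      = ∑ᶠ K : Fin n →₀ ℕ,
          if (∑ j, K j) = m then
            (∏ j, Nat.factorial (K j) : ℕ) * coeff K (FA A) * conj (coeff K (FA B))
          else 0 := by
  classical
  set S : Finset (Fin n →₀ ℕ) := Finset.image D (Finset.univ : Finset (Fin m → Fin n)) with hS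
  have hmemS : ∀ f : Fin m → Fin n, D f ∈ S := fun f =>
    Finset.mem_image_of_mem D (Finset.mem_univ f)
  have hcoeff0 : ∀ K ∉ S, coeff K (FA A) = 0 := by
    intro K hK
    rw [coeff_FA]
    refine Finset.sum_eq_zero fun f _ => if_neg fun h => hK ?_
    rw [← h]
    exact hmemS f
  have hsupp : (Function.support fun K : Fin n →₀ ℕ =>
      if (∑ j, K j) = m then
        ((∏ j, Nat.factorial (K j) : ℕ) : ℂ) * coeff K (FA A) * conj (coeff K (FA B))
      else 0) ⊆ ↑S := by
    intro K hK
    simp only [Function.mem_support] at hK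
    by_contra hKS
    apply hK
    rw [hcoeff0 K hKS]
    split_ifs <;> ring
  rw [finsum_eq_finset_sum_of_support_subset _ hsupp, lhs_eq]
  have step1 : ∀ K ∈ S,
      (if (∑ j, K j) = m then
        ((∏ j, Nat.factorial (K j) : ℕ) : ℂ) * coeff K (FA A) * conj (coeff K (FA B))
      else 0)
        = ∑ f : Fin m → Fin n, ∑ g : Fin m → Fin n,
            (if D f = K ∧ D g = K then
              ((∏ j, Nat.factorial (K j) : ℕ) : ℂ) * (∏ i, A i (f i)) * (∏ i, conj (B i (g i)))
            else 0) := by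
    intro K hK
    obtain ⟨f₀, -, rfl⟩ := Finset.mem_image.mp hK
    rw [if_pos (sum_D f₀), coeff_FA, coeff_FA, map_sum]
    have hconj : ∀ g : Fin m → Fin n,
        conj (if D g = D f₀ then ∏ i, B i (g i) else 0)
          = if D g = D f₀ then ∏ i, conj (B i (g i)) else 0 := by
      intro g; split_ifs <;> simp [map_prod]
    rw [Fintype.sum_congr _ _ hconj]
    simp only [Finset.mul_sum, Finset.sum_mul]
    rw [Finset.sum_comm]
    refine Finset.sum_congr rfl fun f _ => Finset.sum_congr rfl fun g _ => ?_
    by_cases h1 : D f = D f₀ <;> by_cases h2 : D g = D f₀ <;> simp [h1, h2]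
  rw [Finset.sum_congr rfl step1]
  conv_rhs => rw [Finset.sum_comm]
  refine Finset.sum_congr rfl fun f _ => ?_
  conv_rhs => rw [Finset.sum_comm]
  rw [← Finset.mul_sum, sum_perm_comp f (fun g => ∏ i, conj (B i (g i))), Finset.mul_sum]
  refine Finset.sum_congr rfl fun g _ => ?_
  rw [Finset.sum_eq_single_of_mem (D f) (hmemS f)]
  · rw [card_perm_filter]
    by_cases h : D f = D g
    · rw [if_pos h, if_pos ⟨rfl, h.symm⟩]
      push_cast
      ring
    · rw [if_neg h, if_neg (fun hc : D f = D f ∧ D g = D f => h hc.2.symm)]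
      simp
  · intro K hKS hne
    exact if_neg fun hc => hne hc.1.symm
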